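/- Let v be a ℤⁿ-valued valuation on ℂ[x₁,…,xₙ] such that for every finite-dimensional ℂ-subspace L ⊆ ℂ[x₁,…,xₙ], the set v(L \ {0}) has cardinality equal to dim_ℂ L. Let v' on nonzero elements of ℂ[x₁,…,x_{n+1}] be defined by writing f = x_{n+1}^e·g with x_{n+1} not dividing g and setting v'(f) = (v(g|_{x_{n+1}=0}), e). Let I ⊆ ℂ[x₀,…,xₙ] be a homogeneous ideal and I' ⊆ ℂ[x₀,…,x_{n+1}] its extension. Then for every natural number j: v'((I'_j)|_{x₀=1} \ {0}) = ⋃_{i=0}^j ( v((I_i)|_{x₀=1} \ {0}) × {j−i} ) as subsets of ℤⁿ × ℤ. -/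

import Mathlib

open MvPolynomial

/-- The lexicographic linear order on `ℤⁿ`. -/
noncomputable instance lexPiIntLinearOrder (n : ℕ) : LinearOrder (Lex (Fin n → ℤ)) :=
  @Pi.Lex.linearOrder (Fin n) (fun _ => ℤ) Fin.instLinearOrder
    (inferInstanceAs (WellFoundedLT (Fin n))) inferInstance

noncomputable instance lexPiIntMin (n : ℕ) : Min (Lex (Fin n → ℤ)) :=
  @LinearOrder.toMin _ (lexPiIntLinearOrder n)

/-- The degree-`s` homogeneous component of an ideal in `ℂ[x₀,…,xₘ]`,
as a `ℂ`-subspace of the polynomial ring. -/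
noncomputable def idealComponent {m : ℕ} (I : Ideal (MvPolynomial (Fin (m + 1)) ℂ)) (s : ℕ) :
    Submodule ℂ (MvPolynomial (Fin (m + 1)) ℂ) :=
  I.restrictScalars ℂ ⊓ homogeneousSubmodule (Fin (m + 1)) ℂ s

/-- Setting `x₀ = 1`: the dehomogenization map `ℂ[x₀,…,xₘ] → ℂ[x₁,…,xₘ]`. -/
noncomputable def dehom (m : ℕ) : MvPolynomial (Fin (m + 1)) ℂ →ₐ[ℂ] MvPolynomial (Fin m) ℂ :=
  aeval (Fin.cases 1 X)


/-- Separate the last variable: `ℂ[x₁,…,x_{m+1}] ≃ ℂ[x₁,…,x_m][y]`. -/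
noncomputable def lastEquiv (m : ℕ) :
    MvPolynomial (Fin (m + 1)) ℂ ≃ₐ[ℂ] Polynomial (MvPolynomial (Fin m) ℂ) :=
  (renameEquiv ℂ (finRotate (m + 1))).trans (MvPolynomial.finSuccEquiv ℂ m)

lemma lastEquiv_X_last (m : ℕ) : lastEquiv m (X (Fin.last m)) = Polynomial.X := by
  simp [lastEquiv, finRotate_last, finSuccEquiv_X_zero]

lemma lastEquiv_X_castSucc (m : ℕ) (i : Fin m) :
    lastEquiv m (X i.castSucc) = Polynomial.C (X i) := by
  simp only [lastEquiv, AlgEquiv.trans_apply, renameEquiv_apply, rename_X,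
    finRotate_succ_apply, Fin.coeSucc_eq_succ, finSuccEquiv_X_succ]

lemma lastEquiv_rename (m : ℕ) (q : MvPolynomial (Fin m) ℂ) :
    lastEquiv m (rename Fin.castSucc q) = Polynomial.C q := by
  induction q using MvPolynomial.induction_on with
  | C c => simp [lastEquiv, finSuccEquiv_apply]
  | add p q hp hq => simp [hp, hq]
  | mul_X p i hp => simp [hp, lastEquiv_X_castSucc]

lemma lastEquiv_C (m : ℕ) (c : ℂ) : lastEquiv m (C c) = Polynomial.C (C c) := by
  simp [lastEquiv, finSuccEquiv_apply]


lemma dehom_X_last (m : ℕ) : dehom (m + 1) (X (Fin.last (m + 1))) = X (Fin.last m) := by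
  rw [dehom, aeval_X, ← Fin.succ_last, Fin.cases_succ]

lemma dehom_X_zero (m : ℕ) : dehom m (X 0) = 1 := by simp [dehom]

lemma dehom_X_succ (m : ℕ) (k : Fin m) : dehom m (X k.succ) = X k := by simp [dehom]

lemma lastEquiv_dehom (m : ℕ) (F : MvPolynomial (Fin (m + 2)) ℂ) :
    lastEquiv m (dehom (m + 1) F) =
      (lastEquiv (m + 1) F).map (dehom m).toRingHom := by
  induction F using MvPolynomial.induction_on with
  | C c =>
      simp only [lastEquiv_C]
      rw [show dehom (m+1) (C c) = C c by simp [dehom], lastEquiv_C, Polynomial.map_C]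
      simp [dehom]
  | add p q hp hq => simp [map_add, hp, hq, Polynomial.map_add]
  | mul_X p i hp =>
      rw [map_mul, map_mul, map_mul, Polynomial.map_mul, hp]
      refine congrArg (_ * ·) ?_
      induction i using Fin.lastCases with
      | last =>
          rw [dehom_X_last, lastEquiv_X_last, lastEquiv_X_last, Polynomial.map_X]
      | cast i' =>
          rw [lastEquiv_X_castSucc, Polynomial.map_C]
          induction i' using Fin.cases with
          | zero =>
              rw [show (Fin.castSucc (0 : Fin (m+1))) = 0 from rfl, dehom_X_zero]
              simp [dehom_X_zero]
          | succ k =>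
              rw [← Fin.succ_castSucc, dehom_X_succ, lastEquiv_X_castSucc]
              simp [dehom_X_succ]

lemma dehom_rename (m : ℕ) (p : MvPolynomial (Fin (m + 1)) ℂ) :
    dehom (m + 1) (rename Fin.castSucc p) = rename Fin.castSucc (dehom m p) := by
  induction p using MvPolynomial.induction_on with
  | C c => simp [dehom]
  | add p q hp hq => simp [map_add, hp, hq]
  | mul_X p i hp =>
      rw [map_mul, rename_X, map_mul, hp, map_mul, map_mul]
      congr 1
      induction i using Fin.cases with
      | zero => simp [dehom]
      | succ k =>
          rw [← Fin.succ_castSucc, dehom_X_succ, dehom_X_succ, rename_X]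

lemma aevalLast_rename (m : ℕ) (p : MvPolynomial (Fin m) ℂ) :
    aeval (Fin.lastCases 0 X) (rename (Fin.castSucc : Fin m → Fin (m + 1)) p) = p := by
  rw [aeval_rename]
  have h : ((Fin.lastCases 0 X : Fin (m+1) → MvPolynomial (Fin m) ℂ) ∘ Fin.castSucc)
      = (X : Fin m → MvPolynomial (Fin m) ℂ) := funext fun i => by simp
  rw [h]
  exact aeval_X_left_apply p

lemma aevalLast_eq (m : ℕ) (g : MvPolynomial (Fin (m + 1)) ℂ) :
    aeval (Fin.lastCases 0 X) g = Polynomial.eval 0 (lastEquiv m g) := by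
  induction g using MvPolynomial.induction_on with
  | C c => simp [lastEquiv_C]
  | add p q hp hq => rw [map_add, map_add, Polynomial.eval_add, hp, hq]
  | mul_X p i hp =>
      rw [map_mul, map_mul, Polynomial.eval_mul, hp]
      congr 1
      induction i using Fin.lastCases with
      | last => simp [lastEquiv_X_last]
      | cast i' => simp [lastEquiv_X_castSucc]

lemma Xlast_dvd_iff (m : ℕ) (g : MvPolynomial (Fin (m + 1)) ℂ) :
    X (Fin.last m) ∣ g ↔ Polynomial.X ∣ lastEquiv m g := by
  constructor
  · rintro ⟨h, rfl⟩
    exact ⟨lastEquiv m h, by rw [map_mul, lastEquiv_X_last]⟩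
  · rintro ⟨h, hh⟩
    refine ⟨(lastEquiv m).symm h, (lastEquiv m).injective ?_⟩
    rw [map_mul, lastEquiv_X_last, AlgEquiv.apply_symm_apply, hh]

lemma degree_mapDomain {σ τ : Type*} (f : σ → τ) (u : σ →₀ ℕ) :
    (Finsupp.mapDomain f u).degree = u.degree := by
  classical
  show (Finsupp.mapDomain f u).sum (fun _ x => x) = u.sum (fun _ x => x)
  exact Finsupp.sum_mapDomain_index (fun _ => rfl) (fun _ _ _ => rfl)

lemma degree_cons {m : ℕ} (e : ℕ) (d : Fin m →₀ ℕ) :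
    (Finsupp.cons e d).degree = e + d.degree := by
  have key : ∀ (k : ℕ) (u : Fin k →₀ ℕ), u.degree = ∑ i, u i := by
    intro k u
    show u.sum (fun _ x => x) = _
    exact Finsupp.sum_fintype _ _ (fun _ => rfl)
  rw [key _ (Finsupp.cons e d), key _ d, Fin.sum_univ_succ]
  simp [Finsupp.cons_zero, Finsupp.cons_succ]

lemma lastEquiv_coeff_homogeneous {m j e : ℕ} {F : MvPolynomial (Fin (m + 1)) ℂ}
    (hF : F.IsHomogeneous j) (h : (lastEquiv m F).coeff e ≠ 0) :
    e ≤ j ∧ ((lastEquiv m F).coeff e).IsHomogeneous (j - e) := by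
  have key : ∀ d : Fin m →₀ ℕ, coeff d ((lastEquiv m F).coeff e) ≠ 0 →
      e + d.degree = j := by
    intro d hd
    rw [show lastEquiv m F = finSuccEquiv ℂ m (rename (finRotate (m+1)) F) from rfl,
      finSuccEquiv_coeff_coeff] at hd
    obtain ⟨u, hu, hcu⟩ := coeff_rename_ne_zero _ _ _ hd
    have hdeg : u.degree = j := by
      have := hF hcu
      rwa [Pi.one_def, ← Finsupp.degree_eq_weight_one] at this
    have := degree_mapDomain (finRotate (m+1)) u
    rw [hu, degree_cons, hdeg] at this
    omega
  obtain ⟨d, hd⟩ := exists_coeff_ne_zero h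
  have hej := key d hd
  refine ⟨by omega, fun d' hd' => ?_⟩
  have := key d' hd'
  rw [Pi.one_def, ← Finsupp.degree_eq_weight_one]
  omega

lemma mem_idealComponent' {m : ℕ} {I : Ideal (MvPolynomial (Fin (m + 1)) ℂ)} {s : ℕ}
    {F : MvPolynomial (Fin (m + 1)) ℂ}
    (K : Submodule ℂ (MvPolynomial (Fin (m + 1)) ℂ))
    (hK : K = I.restrictScalars ℂ ⊓ homogeneousSubmodule (Fin (m + 1)) ℂ s) :
    F ∈ K ↔ F ∈ I ∧ F.IsHomogeneous s := by
  subst hK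
  rw [Submodule.mem_inf, Submodule.restrictScalars_mem, mem_homogeneousSubmodule]

/-- Let `v` be a `ℤⁿ`-valued valuation on `ℂ[x₁,…,xₙ]` with
`#v(L∖{0}) = dim L` for all finite-dimensional subspaces `L`, let `v'` be its extension to
`ℂ[x₁,…,x_{n+1}]` defined by `v'(x_{n+1}^e·g) = (v(g|_{x_{n+1}=0}), e)` for `x_{n+1} ∤ g`,
and let `I' ⊆ ℂ[x₀,…,x_{n+1}]` be the extension of a homogeneous ideal
`I ⊆ ℂ[x₀,…,xₙ]`. Then for every `j`:
`v'((I'_j)|_{x₀=1} ∖ {0}) = ⋃_{i=0}^j ( v((I_i)|_{x₀=1} ∖ {0}) × {j−i} )`. -/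
theorem valuation_image_extension_component (n : ℕ)
    (v : MvPolynomial (Fin n) ℂ → Lex (Fin n → ℤ))
    (hv_mul : ∀ f g : MvPolynomial (Fin n) ℂ, f ≠ 0 → g ≠ 0 → v (f * g) = v f + v g)
    (hv_add : ∀ f g : MvPolynomial (Fin n) ℂ, f ≠ 0 → g ≠ 0 → f + g ≠ 0 →
      min (v f) (v g) ≤ v (f + g))
    (hv_const : ∀ c : ℂ, c ≠ 0 → v (C c) = 0)
    (hv_card : ∀ L : Submodule ℂ (MvPolynomial (Fin n) ℂ), FiniteDimensional ℂ L →
      (v '' ((L : Set (MvPolynomial (Fin n) ℂ)) \ {0})).ncard = Module.finrank ℂ L)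
    (v' : MvPolynomial (Fin (n + 1)) ℂ → (Fin n → ℤ) × ℤ)
    (hv'_def : ∀ (e : ℕ) (g : MvPolynomial (Fin (n + 1)) ℂ),
      ¬ (X (Fin.last n) ∣ g) →
      v' (X (Fin.last n) ^ e * g) =
        (ofLex (v (aeval (Fin.lastCases 0 X) g)), (e : ℤ)))
    (I : Ideal (MvPolynomial (Fin (n + 1)) ℂ))
    (hI : ∃ S : Set (MvPolynomial (Fin (n + 1)) ℂ),
      (∀ f ∈ S, ∃ e : ℕ, f.IsHomogeneous e) ∧ I = Ideal.span S)
    (I' : Ideal (MvPolynomial (Fin (n + 2)) ℂ))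
    (hI' : I' = Ideal.map (rename (Fin.castSucc : Fin (n + 1) → Fin (n + 2))).toRingHom I)
    (j : ℕ) :
    v' '' ((⇑(dehom (n + 1)) ''
        ((idealComponent I' j : Set (MvPolynomial (Fin (n + 2)) ℂ)))) \ {0}) =
      ⋃ i ∈ Set.Iic j,
        ((fun f => ofLex (v f)) ''
            ((⇑(dehom n) '' ((idealComponent I i : Set (MvPolynomial (Fin (n + 1)) ℂ)))) \ {0}))
          ×ˢ {((j - i : ℕ) : ℤ)} := by
  ext z
  simp only [Set.mem_image, Set.mem_diff, Set.mem_singleton_iff, Set.mem_iUnion,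
    Set.mem_Iic, Set.mem_prod, exists_prop]
  constructor
  · rintro ⟨f, ⟨⟨F, hFmem, rfl⟩, hf0⟩, rfl⟩
    obtain ⟨hFI, hFhom⟩ := (mem_idealComponent' (idealComponent I' j) rfl).mp hFmem
    set f := dehom (n + 1) F with hf
    set p := lastEquiv n f with hp
    have hpne : p ≠ 0 := fun h =>
      hf0 ((lastEquiv n).injective (by rw [map_zero]; exact h))
    obtain ⟨q, hpq, hqnd⟩ := p.exists_eq_pow_rootMultiplicity_mul_and_not_dvd hpne 0
    rw [map_zero, sub_zero] at hpq hqnd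
    set e := p.rootMultiplicity 0 with he
    have hP : p = (lastEquiv (n + 1) F).map (dehom n).toRingHom := lastEquiv_dehom n F
    set c := (lastEquiv (n + 1) F).coeff e with hc
    have hcoe : q.coeff 0 = dehom n c := by
      have h1 : p.coeff e = dehom n c := by rw [hP, Polynomial.coeff_map]; rfl
      have h2 : p.coeff e = q.coeff 0 := by
        conv_lhs => rw [hpq]
        simpa using Polynomial.coeff_X_pow_mul q e 0
      rw [← h2, h1]
    have hq0 : q.coeff 0 ≠ 0 := fun h => hqnd (Polynomial.X_dvd_iff.mpr h)
    have hcd : dehom n c ≠ 0 := hcoe ▸ hq0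
    have hcne : c ≠ 0 := fun h => hcd (by rw [h, map_zero])
    have hcI : c ∈ I := by
      have hh : ((lastEquiv (n + 1)).toAlgHom.toRingHom).comp
          (rename (Fin.castSucc : Fin (n + 1) → Fin (n + 2))).toRingHom
          = (Polynomial.C : MvPolynomial (Fin (n + 1)) ℂ →+* _) :=
        RingHom.ext fun x => lastEquiv_rename (n + 1) x
      have h1 : lastEquiv (n + 1) F ∈ Ideal.map
          (Polynomial.C : MvPolynomial (Fin (n + 1)) ℂ →+* _) I := by
        rw [← hh, ← Ideal.map_map]
        exact Ideal.mem_map_of_mem _ (hI' ▸ hFI)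
      exact Ideal.mem_map_C_iff.mp h1 e
    obtain ⟨hej, hchom⟩ := lastEquiv_coeff_homogeneous hFhom hcne
    set g := (lastEquiv n).symm q with hg
    have hfg : f = X (Fin.last n) ^ e * g := by
      apply (lastEquiv n).injective
      rw [map_mul, map_pow, lastEquiv_X_last, hg, AlgEquiv.apply_symm_apply, ← hp, hpq]
    have hgnd : ¬ X (Fin.last n) ∣ g := by
      rw [Xlast_dvd_iff, hg, AlgEquiv.apply_symm_apply]; exact hqnd
    have hvf : v' f = (ofLex (v (dehom n c)), (e : ℤ)) := by
      rw [hfg, hv'_def e g hgnd, aevalLast_eq, hg, AlgEquiv.apply_symm_apply,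
        ← Polynomial.coeff_zero_eq_eval_zero, hcoe]
    refine ⟨j - e, by omega, ?_, ?_⟩
    · rw [hvf]
      exact ⟨dehom n c,
        ⟨⟨c, (mem_idealComponent' (idealComponent I (j - e)) rfl).mpr ⟨hcI, hchom⟩, rfl⟩, hcd⟩, rfl⟩
    · rw [hvf]
      simp [Nat.sub_sub_self hej]
  · rintro ⟨i, hij, ⟨fc, ⟨⟨c, hcmem, rfl⟩, hfc0⟩, hz1⟩, hz2⟩
    obtain ⟨hcI, hchom⟩ := (mem_idealComponent' (idealComponent I i) rfl).mp hcmem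
    set F := X (Fin.last (n + 1)) ^ (j - i) * rename Fin.castSucc c with hF
    have hFI : F ∈ I' := by
      subst hI'
      exact Ideal.mul_mem_left _ _ (Ideal.mem_map_of_mem _ hcI)
    have hFhom : F.IsHomogeneous j := by
      have := (isHomogeneous_X_pow (R := ℂ) (Fin.last (n + 1)) (j - i)).mul
        (hchom.rename_isHomogeneous (f := Fin.castSucc))
      rwa [Nat.sub_add_cancel hij] at this
    have hfd : dehom (n + 1) F
        = X (Fin.last n) ^ (j - i) * rename Fin.castSucc (dehom n c) := by
      rw [hF, map_mul, map_pow, dehom_X_last, dehom_rename]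
    have hnd : ¬ X (Fin.last n) ∣ rename Fin.castSucc (dehom n c) := by
      rw [Xlast_dvd_iff, lastEquiv_rename]
      intro hdvd
      have h0 := Polynomial.X_dvd_iff.mp hdvd
      rw [Polynomial.coeff_C_zero] at h0
      exact hfc0 h0
    have hfne : dehom (n + 1) F ≠ 0 := by
      rw [hfd]
      refine mul_ne_zero (pow_ne_zero _ (X_ne_zero _)) (fun h => hfc0 ?_)
      exact (map_eq_zero_iff _ (rename_injective _ (Fin.castSucc_injective _))).mp h
    have hv'F : v' (dehom (n + 1) F) = (ofLex (v (dehom n c)), ((j - i : ℕ) : ℤ)) := by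
      rw [hfd, hv'_def _ _ hnd, aevalLast_rename]
    refine ⟨dehom (n + 1) F, ⟨⟨F,
      (mem_idealComponent' (idealComponent I' j) rfl).mpr ⟨hFI, hFhom⟩, rfl⟩,
      hfne⟩, ?_⟩
    rw [hv'F]
    exact Prod.ext hz1 hz2.symm
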